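/- Srivastava–Pintér type theorem: for n ∈ ℕ₀ and m ∈ ℕ, 𝔊_{n,q}^{(α)}(x,y) = ∑_{k=0}^n [n choose k]_q (1/(m^{n-k-1}[k+1]_q)) · [ 2[k+1]_q ∑_{j=0}^k [k choose j]_q m^{j-k} 𝔊_{j,q}^{(α-1)}(x,-1) − ∑_{j=0}^{k+1} [k+1 choose j]_q m^{j-k-1} 𝔊_{j,q}^{(α)}(x,-1) − 𝔊_{k+1,q}^{(α)}(x,0) ] · 𝔅_{n-k,q}(0, my). -/

import Mathlib

open PowerSeries Finset

/-- The `q`-integer `[n]_q = 1 + q + ⋯ + q^(n-1)`. -/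
noncomputable def qInt (q : ℂ) (n : ℕ) : ℂ := ∑ i ∈ Finset.range n, q ^ i

/-- The `q`-factorial `[n]_q!`. -/
noncomputable def qFact (q : ℂ) : ℕ → ℂ
  | 0 => 1
  | n + 1 => qFact q n * qInt q (n + 1)

/-- The Gaussian (`q`-binomial) coefficient. -/
noncomputable def qBinom (q : ℂ) (n k : ℕ) : ℂ := qFact q n / (qFact q k * qFact q (n - k))

/-- The formal power series `e_q(tx) = ∑ x^n t^n/[n]_q!`. -/
noncomputable def qExpSeries (q : ℂ) (x : ℂ) : PowerSeries ℂ :=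
  PowerSeries.mk fun n => x ^ n / qFact q n

/-- The formal power series `E_q(ty) = ∑ q^(n(n-1)/2) y^n t^n/[n]_q!`. -/
noncomputable def qExpSeries' (q : ℂ) (y : ℂ) : PowerSeries ℂ :=
  PowerSeries.mk fun n => q ^ (n * (n - 1) / 2) * y ^ n / qFact q n

/-- Generating series `(2t/(e_q(t)+1))^α e_q(tx) E_q(ty)` of the `q`-Genocchi polynomials. -/
noncomputable def qGenocchiSeries (q : ℂ) (α : ℕ) (x y : ℂ) : PowerSeries ℂ :=
  (PowerSeries.C (2 : ℂ) * PowerSeries.X * (qExpSeries q 1 + 1)⁻¹) ^ α *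
    qExpSeries q x * qExpSeries' q y

/-- The `q`-Genocchi polynomial `𝔊_{n,q}^{(α)}(x,y)`. -/
noncomputable def qGenocchi (q : ℂ) (α : ℕ) (x y : ℂ) (n : ℕ) : ℂ :=
  qFact q n * PowerSeries.coeff n (qGenocchiSeries q α x y)

/-- The `q`-Bernoulli polynomial `𝔅_{n,q}(x,y)`, defined via
`(t/(e_q(t)-1)) e_q(tx) E_q(ty) = ∑ 𝔅_{n,q}(x,y) t^n/[n]_q!`
(note `t/(e_q(t)-1)` is the inverse of the series `∑ t^n/[n+1]_q!`). -/
noncomputable def qBernoulli (q : ℂ) (x y : ℂ) (n : ℕ) : ℂ :=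
  qFact q n * PowerSeries.coeff n
    ((PowerSeries.mk fun k => (qFact q (k + 1))⁻¹)⁻¹ * qExpSeries q x * qExpSeries' q y)

/-- The Gauss polynomial `(x+y)_q^n = ∑_k [n k]_q q^(k(k-1)/2) x^(n-k) y^k`. -/
noncomputable def qAddPow (q : ℂ) (x y : ℂ) (n : ℕ) : ℂ :=
  ∑ k ∈ Finset.range (n + 1), qBinom q n k * q ^ (k * (k - 1) / 2) * x ^ (n - k) * y ^ k

/- ### auxiliary lemmas -/

section Aux
variable (q : ℂ)

lemma qFact_ne_zero (hq : ∀ n : ℕ, qInt q (n + 1) ≠ 0) : ∀ n, qFact q n ≠ 0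
  | 0 => one_ne_zero
  | n + 1 => mul_ne_zero (qFact_ne_zero hq n) (hq n)

lemma qInt_zero : qInt q 0 = 0 := by simp [qInt]

lemma qInt_one : qInt q 1 = 1 := by simp [qInt]

lemma qFact_one : qFact q 1 = 1 := by
  show qFact q 0 * qInt q 1 = 1
  simp [qFact, qInt_one]

lemma qInt_add (a b : ℕ) : qInt q (a + b) = qInt q a + q ^ a * qInt q b := by
  simp [qInt, Finset.sum_range_add, pow_add, Finset.mul_sum]

lemma tri (i : ℕ) : (i+1)*i/2 = i*(i-1)/2 + i := by
  rcases i with _ | j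
  · simp
  · obtain ⟨b, hb⟩ := Nat.even_mul_succ_self j
    have e1 : (j+1+1)*(j+1) = j*(j+1) + 2*(j+1) := by ring
    have e2 : (j+1)*(j+1-1) = j*(j+1) := by rw [Nat.add_sub_cancel]; ring
    rw [e1, e2, hb]
    omega

lemma qExp_zero : qExpSeries q 0 = 1 := by
  ext n
  cases n <;> simp [qExpSeries, qFact, PowerSeries.coeff_zero_eq_constantCoeff]

lemma qExp'_zero : qExpSeries' q 0 = 1 := by
  ext n
  cases n <;> simp [qExpSeries', qFact, PowerSeries.coeff_zero_eq_constantCoeff]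

lemma exp_mul_exp' (hq : ∀ n : ℕ, qInt q (n + 1) ≠ 0) :
    qExpSeries q 1 * qExpSeries' q (-1) = 1 := by
  have hF := qFact_ne_zero q hq
  ext N
  rw [PowerSeries.coeff_mul, Finset.Nat.sum_antidiagonal_eq_sum_range_succ_mk]
  rcases N with _ | M
  · simp [qExpSeries, qExpSeries', qFact]
  · set N := M + 1 with hNdef
    rw [PowerSeries.coeff_one, if_neg (by omega)]
    have hN : qInt q N ≠ 0 := hq M
    set a : ℕ → ℂ := fun i =>
      q ^ ((N-i)*(N-i-1)/2) * (-1 : ℂ) ^ (N-i) * ((qFact q i)⁻¹ * (qFact q (N-i-1))⁻¹) with ha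
    set t : ℕ → ℂ := fun k =>
      (coeff k) (qExpSeries q 1) * (coeff (N-k)) (qExpSeries' q (-1)) with ht
    suffices hkey : qInt q N * ∑ k ∈ range (N+1), t k = 0 by
      exact (mul_eq_zero.mp hkey).resolve_left hN
    rw [Finset.mul_sum]
    have step : ∀ k ∈ range (N+1),
        qInt q N * t k = qInt q (N-k) * t k + q ^ (N-k) * qInt q k * t k := by
      intro k hk
      simp only [Finset.mem_range] at hk
      have h := qInt_add q (N-k) k
      rw [show N-k+k = N by omega] at h
      rw [h]
      ring
    rw [Finset.sum_congr rfl step, Finset.sum_add_distrib]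
    have hA : ∑ k ∈ range (N+1), qInt q (N-k) * t k = ∑ k ∈ range N, a k := by
      rw [Finset.sum_range_succ, Nat.sub_self, qInt_zero, zero_mul, add_zero]
      refine Finset.sum_congr rfl fun k hk => ?_
      simp only [Finset.mem_range] at hk
      obtain ⟨e, he⟩ : ∃ e, N - k = e + 1 := ⟨N-k-1, by omega⟩
      simp only [ht, ha, qExpSeries, qExpSeries', coeff_mk, he,
        show N-k-1 = e by omega, Nat.add_sub_cancel]
      rw [show qFact q (e+1) = qFact q e * qInt q (e+1) from rfl]
      have h1 := hF k; have h2 := hF e; have h3 := hq e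
      field_simp
      ring
    have hB : ∑ k ∈ range (N+1), q ^ (N-k) * qInt q k * t k = ∑ i ∈ range N, -(a i) := by
      rw [Finset.sum_range_succ', qInt_zero]
      simp only [mul_zero, zero_mul, add_zero]
      refine Finset.sum_congr rfl fun i hi => ?_
      simp only [Finset.mem_range] at hi
      obtain ⟨e, he⟩ : ∃ e, N - i = e + 1 := ⟨N-i-1, by omega⟩
      simp only [ht, ha, qExpSeries, qExpSeries', coeff_mk, he,
        show N-(i+1) = e by omega, show N-i-1 = e by omega, Nat.add_sub_cancel]
      rw [show qFact q (i+1) = qFact q i * qInt q (i+1) from rfl]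
      rw [show (e+1)*e/2 = e*(e-1)/2 + e from tri e, pow_add, pow_succ]
      have h1 := hF i; have h2 := hF e; have h3 := hq i
      field_simp
      ring
    rw [hA, hB]
    simp

lemma constCoeff_genocchi (α : ℕ) (hα : 1 ≤ α) (x y : ℂ) :
    constantCoeff (qGenocchiSeries q α x y) = 0 := by
  unfold qGenocchiSeries
  rw [map_mul, map_mul, map_pow, map_mul, map_mul]
  simp [zero_pow (by omega : α ≠ 0)]

lemma e_one_eq : qExpSeries q 1 = 1 + X * (PowerSeries.mk fun k => (qFact q (k + 1))⁻¹) := by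
  ext n
  cases n with
  | zero => simp [qExpSeries, qFact, PowerSeries.coeff_zero_eq_constantCoeff]
  | succ k =>
    rw [map_add, PowerSeries.coeff_succ_X_mul]
    simp [qExpSeries, coeff_mk, PowerSeries.coeff_one, div_eq_mul_inv]

lemma D_mul_D_inv :
    (PowerSeries.mk fun k => (qFact q (k + 1))⁻¹ : PowerSeries ℂ) *
      (PowerSeries.mk fun k => (qFact q (k + 1))⁻¹)⁻¹ = 1 := by
  apply PowerSeries.mul_inv_cancel
  rw [← PowerSeries.coeff_zero_eq_constantCoeff]
  simp [coeff_mk, qFact_one]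

lemma rescale_E' (m : ℕ) (hm : 1 ≤ m) (y : ℂ) :
    rescale ((m : ℂ))⁻¹ (qExpSeries' q ((m : ℂ) * y)) = qExpSeries' q y := by
  have hm0 : (m:ℂ) ≠ 0 := Nat.cast_ne_zero.2 (by omega)
  ext n
  rw [coeff_rescale]
  simp only [qExpSeries', coeff_mk, mul_pow]
  have h : ((m:ℂ))^n * ((m:ℂ))⁻¹^n = 1 := by
    rw [← mul_pow, mul_inv_cancel₀ hm0, one_pow]
  field_simp
  linear_combination q ^ (n * (n - 1) / 2) * y ^ n * (qFact q n)⁻¹ * h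

end Aux

section Main
variable (q : ℂ)

lemma zpow_helper (m : ℕ) (hm : 1 ≤ m) (j k : ℕ) (hjk : j ≤ k) :
    (m:ℂ) ^ ((j:ℤ) - (k:ℤ)) = ((m:ℂ)⁻¹) ^ (k - j) := by
  have hm0 : (m:ℂ) ≠ 0 := Nat.cast_ne_zero.2 (by omega)
  rw [show (j:ℤ)-(k:ℤ) = -((k-j : ℕ) : ℤ) by push_cast; omega, zpow_neg, zpow_natCast, inv_pow]

lemma main_series (hq : ∀ n : ℕ, qInt q (n + 1) ≠ 0) (α : ℕ) (hα : 1 ≤ α)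
    (m : ℕ) (hm : 1 ≤ m) (x : ℂ) :
    (PowerSeries.mk fun k =>
      (2 * qInt q (k + 1) *
          (∑ j ∈ Finset.range (k + 1),
            qBinom q k j * (m : ℂ) ^ ((j : ℤ) - (k : ℤ)) * qGenocchi q (α - 1) x (-1) j) -
        (∑ j ∈ Finset.range (k + 2),
          qBinom q (k + 1) j * (m : ℂ) ^ ((j : ℤ) - (k : ℤ) - 1) * qGenocchi q α x (-1) j) -
        qGenocchi q α x 0 (k + 1)) / qFact q (k + 1) : PowerSeries ℂ)
    = PowerSeries.C ((m:ℂ))⁻¹ * (PowerSeries.C (2 : ℂ) * X * (qExpSeries q 1 + 1)⁻¹) ^ α *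
        qExpSeries q x * rescale ((m : ℂ))⁻¹ (PowerSeries.mk fun k => (qFact q (k + 1))⁻¹) := by
  have hF := qFact_ne_zero q hq
  have hm0 : (m:ℂ) ≠ 0 := Nat.cast_ne_zero.2 (by omega)
  set D : PowerSeries ℂ := PowerSeries.mk fun k => (qFact q (k + 1))⁻¹ with hD
  set e₁ := qExpSeries q 1 with he₁
  set U := PowerSeries.C (2 : ℂ) * X * (e₁ + 1)⁻¹ with hU
  set Ex := qExpSeries q x with hEx
  set Em := qExpSeries' q (-1) with hEm
  set re₁ := rescale ((m:ℂ))⁻¹ e₁ with hre₁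
  set rD := rescale ((m:ℂ))⁻¹ D with hrD
  set F : PowerSeries ℂ := PowerSeries.mk fun k =>
      (2 * qInt q (k + 1) *
          (∑ j ∈ Finset.range (k + 1),
            qBinom q k j * (m : ℂ) ^ ((j : ℤ) - (k : ℤ)) * qGenocchi q (α - 1) x (-1) j) -
        (∑ j ∈ Finset.range (k + 2),
          qBinom q (k + 1) j * (m : ℂ) ^ ((j : ℤ) - (k : ℤ) - 1) * qGenocchi q α x (-1) j) -
        qGenocchi q α x 0 (k + 1)) / qFact q (k + 1) with hFdef
  have hexp : e₁ * Em = 1 := exp_mul_exp' q hq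
  have hc2 : constantCoeff (e₁ + 1) = 2 := by
    rw [map_add, map_one, he₁, ← PowerSeries.coeff_zero_eq_constantCoeff]
    simp [qExpSeries, coeff_mk, qFact]
    norm_num
  have hinv : (e₁ + 1) * (e₁ + 1)⁻¹ = 1 :=
    PowerSeries.mul_inv_cancel _ (by rw [hc2]; norm_num)
  have hCU : PowerSeries.C (2 : ℂ) * X - U = U * e₁ := by
    rw [hU]
    linear_combination (-(PowerSeries.C (2 : ℂ) * X)) * hinv
  have hpow : U ^ α = U ^ (α - 1) * U := by
    rw [← pow_succ]
    congr 1
    omega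
  have hre : re₁ = 1 + PowerSeries.C ((m:ℂ))⁻¹ * X * rD := by
    rw [hre₁, he₁, e_one_eq q, map_add, map_one, map_mul, rescale_X, hrD, hD]
  have hg1 : U ^ (α-1) * Ex * Em = qGenocchiSeries q (α-1) x (-1) := rfl
  have hg2 : U ^ α * Ex * Em = qGenocchiSeries q α x (-1) := rfl
  have hg3 : U ^ α * Ex = qGenocchiSeries q α x 0 := by
    rw [qGenocchiSeries, ← hU, ← hEx, qExp'_zero, mul_one]
  have c1 : ∀ j, qGenocchi q (α-1) x (-1) j = qFact q j * coeff j (U ^ (α-1) * Ex * Em) :=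
    fun j => by rw [hg1]; rfl
  have c2 : ∀ j, qGenocchi q α x (-1) j = qFact q j * coeff j (U ^ α * Ex * Em) :=
    fun j => by rw [hg2]; rfl
  have c3 : ∀ j, qGenocchi q α x 0 j = qFact q j * coeff j (U ^ α * Ex) :=
    fun j => by rw [hg3]; rfl
  have hU0 : constantCoeff U = 0 := by
    rw [hU]
    simp [map_mul]
  -- step 1 : the coefficientwise identity
  have step1 : X * F = PowerSeries.C (2 : ℂ) * X * (U ^ (α - 1) * Ex * Em * re₁)
      - U ^ α * Ex * Em * re₁ - U ^ α * Ex := by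
    ext N
    rcases N with _ | k
    · simp [map_sub, map_mul, map_pow, PowerSeries.constantCoeff_X, hU0,
        zero_pow (show α ≠ 0 by omega), PowerSeries.coeff_zero_eq_constantCoeff]
    · rw [PowerSeries.coeff_succ_X_mul, hFdef, coeff_mk, map_sub, map_sub,
        mul_assoc (PowerSeries.C (2 : ℂ)) X, PowerSeries.coeff_C_mul,
        PowerSeries.coeff_succ_X_mul,
        PowerSeries.coeff_mul (k) (U ^ (α-1) * Ex * Em) re₁,
        PowerSeries.coeff_mul (k+1) (U ^ α * Ex * Em) re₁,
        Finset.Nat.sum_antidiagonal_eq_sum_range_succ_mk,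
        Finset.Nat.sum_antidiagonal_eq_sum_range_succ_mk]
      simp only [c1, c2, c3, hre₁, coeff_rescale, he₁, qExpSeries, coeff_mk, one_pow]
      rw [sub_div, sub_div]
      congr 1
      · congr 1
        · rw [Finset.mul_sum, Finset.mul_sum, Finset.sum_div]
          refine Finset.sum_congr rfl fun j hj => ?_
          have hjk : j ≤ k := by simpa using Nat.lt_succ_iff.mp (Finset.mem_range.mp hj)
          rw [zpow_helper m hm j k hjk, qBinom,
            show qFact q (k+1) = qFact q k * qInt q (k+1) from rfl]
          have h1 := hF j; have h2 := hF k; have h3 := hF (k-j); have h4 := hq k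
          field_simp
        · rw [Finset.sum_div]
          refine Finset.sum_congr rfl fun j hj => ?_
          have hjk : j ≤ k + 1 := by
            have := Finset.mem_range.mp hj
            omega
          rw [show ((j:ℤ) - (k:ℤ) - 1) = (j:ℤ) - ((k+1 : ℕ):ℤ) by push_cast; ring,
            zpow_helper m hm j (k+1) hjk, qBinom]
          have h1 := hF j; have h2 := hF (k+1); have h3 := hF (k+1-j)
          field_simp
      · exact mul_div_cancel_left₀ _ (hF (k+1))
  -- assemble
  refine mul_left_cancel₀ (PowerSeries.X_ne_zero : (X : PowerSeries ℂ) ≠ 0) ?_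
  linear_combination step1 + (U^(α-1)*Ex*Em*re₁) * hCU
    - (Ex*Em*re₁ + e₁*Ex*Em*re₁) * hpow + (U^α*Ex*re₁) * hexp + (U^α*Ex) * hre

end Main

/-- Srivastava–Pintér type theorem relating `q`-Genocchi and `q`-Bernoulli polynomials. -/
theorem qGenocchi_srivastava_pinter (q : ℂ) (hq : ∀ n : ℕ, qInt q (n + 1) ≠ 0)
    (α : ℕ) (hα : 1 ≤ α) (m : ℕ) (hm : 1 ≤ m) (n : ℕ) (x y : ℂ) :
    qGenocchi q α x y n =
      ∑ k ∈ Finset.range (n + 1),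
        qBinom q n k * ((m : ℂ) ^ ((k : ℤ) + 1 - (n : ℤ)) / qInt q (k + 1)) *
          (2 * qInt q (k + 1) *
              (∑ j ∈ Finset.range (k + 1),
                qBinom q k j * (m : ℂ) ^ ((j : ℤ) - (k : ℤ)) * qGenocchi q (α - 1) x (-1) j) -
            (∑ j ∈ Finset.range (k + 2),
              qBinom q (k + 1) j * (m : ℂ) ^ ((j : ℤ) - (k : ℤ) - 1) * qGenocchi q α x (-1) j) -
            qGenocchi q α x 0 (k + 1)) *
          qBernoulli q 0 ((m : ℂ) * y) (n - k) := by
  have hF := qFact_ne_zero q hq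
  have hm0 : (m:ℂ) ≠ 0 := Nat.cast_ne_zero.2 (by omega)
  set P : PowerSeries ℂ := (PowerSeries.mk fun k => (qFact q (k + 1))⁻¹)⁻¹ *
      qExpSeries q 0 * qExpSeries' q ((m : ℂ) * y) with hP
  have h1 : rescale ((m:ℂ))⁻¹ (PowerSeries.mk fun k => (qFact q (k + 1))⁻¹) *
      rescale ((m:ℂ))⁻¹ ((PowerSeries.mk fun k => (qFact q (k + 1))⁻¹)⁻¹) = 1 := by
    rw [← map_mul, D_mul_D_inv q, map_one]
  have key : (PowerSeries.mk fun k =>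
      (2 * qInt q (k + 1) *
          (∑ j ∈ Finset.range (k + 1),
            qBinom q k j * (m : ℂ) ^ ((j : ℤ) - (k : ℤ)) * qGenocchi q (α - 1) x (-1) j) -
        (∑ j ∈ Finset.range (k + 2),
          qBinom q (k + 1) j * (m : ℂ) ^ ((j : ℤ) - (k : ℤ) - 1) * qGenocchi q α x (-1) j) -
        qGenocchi q α x 0 (k + 1)) / qFact q (k + 1) : PowerSeries ℂ) * rescale ((m:ℂ))⁻¹ P
      = PowerSeries.C ((m:ℂ))⁻¹ * qGenocchiSeries q α x y := by
    rw [main_series q hq α hα m hm x, hP, map_mul, map_mul, qExp_zero, map_one, mul_one,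
      rescale_E' q m hm y, qGenocchiSeries]
    linear_combination (PowerSeries.C ((m:ℂ))⁻¹ *
      (PowerSeries.C (2 : ℂ) * X * (qExpSeries q 1 + 1)⁻¹) ^ α *
      qExpSeries q x * qExpSeries' q y) * h1
  have hB : ∀ l, (coeff l) P = qBernoulli q 0 ((m : ℂ) * y) l / qFact q l := by
    intro l
    rw [eq_div_iff (hF l), qBernoulli, hP]
    ring
  have hco := congrArg (coeff n) key
  rw [PowerSeries.coeff_C_mul, PowerSeries.coeff_mul,
    Finset.Nat.sum_antidiagonal_eq_sum_range_succ_mk] at hco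
  simp only [coeff_mk, coeff_rescale, hB] at hco
  have h2 : (m:ℂ) * (∑ k ∈ Finset.range (n+1),
      (2 * qInt q (k + 1) *
          (∑ j ∈ Finset.range (k + 1),
            qBinom q k j * (m : ℂ) ^ ((j : ℤ) - (k : ℤ)) * qGenocchi q (α - 1) x (-1) j) -
        (∑ j ∈ Finset.range (k + 2),
          qBinom q (k + 1) j * (m : ℂ) ^ ((j : ℤ) - (k : ℤ) - 1) * qGenocchi q α x (-1) j) -
        qGenocchi q α x 0 (k + 1)) / qFact q (k + 1) *
        (((m:ℂ))⁻¹ ^ (n - k) * (qBernoulli q 0 ((m : ℂ) * y) (n - k) / qFact q (n - k))))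
      = coeff n (qGenocchiSeries q α x y) := by
    rw [hco, ← mul_assoc, mul_inv_cancel₀ hm0, one_mul]
  rw [qGenocchi, ← h2, Finset.mul_sum, Finset.mul_sum]
  refine Finset.sum_congr rfl fun k hk => ?_
  have hkn : k ≤ n := by
    have := Finset.mem_range.mp hk
    omega
  have hz : (m:ℂ) ^ ((k : ℤ) + 1 - (n : ℤ)) = (m:ℂ) * ((m:ℂ))⁻¹ ^ (n - k) := by
    rw [show (k:ℤ) + 1 - (n:ℤ) = 1 - ((n - k : ℕ) : ℤ) by
        have : ((n - k : ℕ) : ℤ) = (n : ℤ) - (k : ℤ) := by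
          push_cast [Nat.cast_sub hkn]
          ring
        omega,
      zpow_sub₀ hm0, zpow_one, zpow_natCast, inv_pow]
    rw [div_eq_mul_inv]
  rw [hz, show qFact q (k+1) = qFact q k * qInt q (k+1) from rfl, qBinom]
  have h3 := hF n; have h4 := hF k; have h5 := hF (n-k); have h6 := hq k
  field_simp
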